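/- Let Γ be a countable group acting Borel amenably on a Borel space X. Then for every x ∈ X, the stabilizer Stab_Γ(x) is an amenable group. -/

import Mathlib

noncomputable section
open Filter Topology

/-- A probability measure on a countable set, seen as a nonnegative ℓ¹-function summing to 1. -/
def IsProbFn {K : Type*} (μ : K → ℝ) : Prop := (∀ k, 0 ≤ μ k) ∧ HasSum μ 1

/-- ℓ¹-distance between two measures on a countable set. -/
def l1dist {K : Type*} (μ ν : K → ℝ) : ℝ := ∑' k, |μ k - ν k|

/-- Pushforward of a measure under the action of a group element. -/
def pushAct {Γ K : Type*} [Group Γ] [MulAction Γ K] (γ : Γ) (μ : K → ℝ) : K → ℝ :=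
  fun k => μ (γ⁻¹ • k)

/-- Borel amenability of an action of a countable group on a Borel space:
Borel maps `μₙ : X → Prob(Γ)` with `‖μₙ(γ·x) − γ·μₙ(x)‖₁ → 0` for all `γ` and `x`. -/
def BorelAmenableAction (Γ X : Type*) [Group Γ] [MeasurableSpace X] [MulAction Γ X] : Prop :=
  ∃ μ : ℕ → X → Γ → ℝ,
    (∀ n x, IsProbFn (μ n x)) ∧
    (∀ n γ, Measurable fun x => μ n x γ) ∧
    ∀ γ : Γ, ∀ x : X, Tendsto (fun n => l1dist (μ n (γ • x)) (pushAct γ (μ n x))) atTop (𝓝 0)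

/-- Amenability of a countable group via a Reiter sequence. -/
def ReiterAmenable (Γ : Type*) [Group Γ] : Prop :=
  ∃ ν : ℕ → Γ → ℝ, (∀ n, IsProbFn (ν n)) ∧
    ∀ γ : Γ, Tendsto (fun n => l1dist (pushAct γ (ν n)) (ν n)) atTop (𝓝 0)

lemma l1dist_comm {K : Type*} (μ ν : K → ℝ) : l1dist μ ν = l1dist ν μ := by
  unfold l1dist
  exact tsum_congr fun k => abs_sub_comm _ _

lemma l1dist_nonneg {K : Type*} (μ ν : K → ℝ) : 0 ≤ l1dist μ ν :=
  tsum_nonneg fun k => abs_nonneg _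

/-- for a Borel amenable action of a countable group `Γ` on a Borel space `X`,
the stabilizer of every point is an amenable group. -/
theorem stabilizer_of_borel_amenable_action_amenable
    {Γ X : Type*} [Group Γ] [Countable Γ] [MeasurableSpace X] [MulAction Γ X]
    (h : BorelAmenableAction Γ X) :
    ∀ x : X, ReiterAmenable ↥(MulAction.stabilizer Γ x) := by
  obtain ⟨μ, hprob, -, hconv⟩ := h
  intro x
  set H := MulAction.stabilizer Γ x with hHdef
  -- the setoid of right cosets of H
  let sd : Setoid Γ :=
    ⟨fun a b => a * b⁻¹ ∈ H, by
      constructor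
      · intro a; simpa using H.one_mem
      · intro a b hab; simpa using H.inv_mem hab
      · intro a b c hab hbc; simpa [mul_assoc] using H.mul_mem hab hbc⟩
  let rep : Γ → Γ := fun g => (Quotient.mk sd g).out
  have hrep : ∀ g, rep g * g⁻¹ ∈ H := fun g => Quotient.exact (Quotient.out_eq (Quotient.mk sd g))
  have hrep_inv : ∀ g : Γ, ∀ h : H, rep ((h : Γ) * g) = rep g := by
    intro g h
    have : Quotient.mk sd ((h : Γ) * g) = Quotient.mk sd g :=
      Quotient.sound (by show (h : Γ) * g * g⁻¹ ∈ H; simpa using h.2)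
    simp only [rep, this]
  -- the equivariant retraction r : Γ → H
  let r : Γ → H := fun g => ⟨g * (rep g)⁻¹, by simpa using H.inv_mem (hrep g)⟩
  have hequiv : ∀ (h : H) (g : Γ), r ((h : Γ) * g) = h * r g := by
    intro h g
    apply Subtype.ext
    show (h : Γ) * g * (rep ((h:Γ) * g))⁻¹ = (h : Γ) * (g * (rep g)⁻¹)
    rw [hrep_inv g h, mul_assoc]
  have hsum : ∀ n, Summable (μ n x) := fun n => (hprob n x).2.summable
  -- the pushed-forward measures on H
  set ν : ℕ → H → ℝ := fun n k => ∑' g : r ⁻¹' {k}, μ n x g with hνdef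
  have hν_nonneg : ∀ n k, 0 ≤ ν n k := fun n k => tsum_nonneg fun g => (hprob n x).1 _
  have hν_hasSum : ∀ n, HasSum (ν n) 1 := by
    intro n
    have he : HasSum (fun p : Σ k : H, r ⁻¹' {k} => μ n x p.2) 1 :=
      (Equiv.hasSum_iff (Equiv.sigmaFiberEquiv r)).2 (hprob n x).2
    exact he.sigma fun k => ((hsum n).subtype _).hasSum
  refine ⟨ν, fun n => ⟨hν_nonneg n, hν_hasSum n⟩, ?_⟩
  intro γ
  -- the key comparison
  have key : ∀ n, l1dist (pushAct γ (ν n)) (ν n) ≤ l1dist (pushAct (γ : Γ) (μ n x)) (μ n x) := by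
    intro n
    set ψ : Γ → ℝ := fun g => |μ n x ((γ : Γ)⁻¹ * g) - μ n x g| with hψdef
    have hsum' : Summable (fun g => μ n x ((γ : Γ)⁻¹ * g)) :=
      (Equiv.mulLeft ((γ : Γ)⁻¹)).summable_iff.2 (hsum n)
    have hψ : Summable ψ := ((hsum').sub (hsum n)).abs
    -- fiber bijections
    have hmem : ∀ (k : H) (g : Γ), g ∈ r ⁻¹' {k} → (γ : Γ)⁻¹ * g ∈ r ⁻¹' {γ⁻¹ * k} := by
      intro k g hg
      have h1 : r (((γ⁻¹ : H) : Γ) * g) = γ⁻¹ * r g := hequiv γ⁻¹ g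
      have hg' : r g = k := hg
      simp only [Set.mem_preimage, Set.mem_singleton_iff]
      rw [show (γ : Γ)⁻¹ = ((γ⁻¹ : H) : Γ) by simp, h1, hg']
    have hmem' : ∀ (k : H) (g : Γ), g ∈ r ⁻¹' {γ⁻¹ * k} → (γ : Γ) * g ∈ r ⁻¹' {k} := by
      intro k g hg
      have h1 : r ((γ : Γ) * g) = γ * r g := hequiv γ g
      have hg' : r g = γ⁻¹ * k := hg
      simp only [Set.mem_preimage, Set.mem_singleton_iff]
      rw [h1, hg', mul_inv_cancel_left]
    have hshift : ∀ k : H, ν n (γ⁻¹ * k) = ∑' g : r ⁻¹' {k}, μ n x ((γ : Γ)⁻¹ * g) := by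
      intro k
      let e : (r ⁻¹' {k}) ≃ (r ⁻¹' {γ⁻¹ * k}) :=
        { toFun := fun g => ⟨(γ : Γ)⁻¹ * g, hmem k g g.2⟩
          invFun := fun g => ⟨(γ : Γ) * g, hmem' k g g.2⟩
          left_inv := fun g => by simp
          right_inv := fun g => by simp }
      exact (Equiv.tsum_eq e (fun g : r ⁻¹' {γ⁻¹ * k} => μ n x g)).symm
    -- per-fiber bound
    have hbound : ∀ k : H, |pushAct γ (ν n) k - ν n k| ≤ ∑' g : r ⁻¹' {k}, ψ g := by
      intro k
      have h1 : pushAct γ (ν n) k = ∑' g : r ⁻¹' {k}, μ n x ((γ : Γ)⁻¹ * g) := by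
        show ν n (γ⁻¹ • k) = _
        rw [smul_eq_mul]; exact hshift k
      rw [h1, hνdef]
      have hs1 : Summable (fun g : r ⁻¹' {k} => μ n x ((γ : Γ)⁻¹ * g)) := hsum'.subtype _
      have hs2 : Summable (fun g : r ⁻¹' {k} => μ n x g) := (hsum n).subtype _
      rw [← hs1.tsum_sub hs2]
      calc |∑' g : r ⁻¹' {k}, (μ n x ((γ : Γ)⁻¹ * g) - μ n x g)|
          ≤ ∑' g : r ⁻¹' {k}, |μ n x ((γ : Γ)⁻¹ * g) - μ n x g| := by
            simpa using norm_tsum_le_tsum_norm (f := fun g : r ⁻¹' {k} =>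
              μ n x ((γ : Γ)⁻¹ * g) - μ n x g) (by have h := hψ.subtype (r ⁻¹' {k}); simp only [hψdef, Function.comp_def] at h; exact h)
        _ = ∑' g : r ⁻¹' {k}, ψ g := rfl
    -- sum over fibers
    have hpsiSig : HasSum (fun p : Σ k : H, r ⁻¹' {k} => ψ p.2) (∑' g, ψ g) :=
      (Equiv.hasSum_iff (Equiv.sigmaFiberEquiv r)).2 hψ.hasSum
    have hfib : HasSum (fun k : H => ∑' g : r ⁻¹' {k}, ψ g) (∑' g, ψ g) :=
      hpsiSig.sigma fun k => (hψ.subtype _).hasSum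
    have hle : l1dist (pushAct γ (ν n)) (ν n) ≤ ∑' g, ψ g := by
      unfold l1dist
      calc ∑' k : H, |pushAct γ (ν n) k - ν n k|
          ≤ ∑' k : H, ∑' g : r ⁻¹' {k}, ψ g := by
            refine Summable.tsum_le_tsum hbound ?_ hfib.summable
            exact Summable.of_nonneg_of_le (fun k => abs_nonneg _) hbound hfib.summable
        _ = ∑' g, ψ g := hfib.tsum_eq
    refine hle.trans_eq ?_
    unfold l1dist pushAct
    exact tsum_congr fun g => by rw [smul_eq_mul]
  -- conclude by squeezing
  have hx : (γ : Γ) • x = x := γ.2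
  have h0 : Tendsto (fun n => l1dist (pushAct (γ : Γ) (μ n x)) (μ n x)) atTop (𝓝 0) := by
    have := hconv (γ : Γ) x
    rw [hx] at this
    simpa [l1dist_comm] using this
  exact squeeze_zero (fun n => l1dist_nonneg _ _) key h0
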